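/- Let c⁰ : [s1, s_max) → ℝ be C² with c⁰ > 0, (c⁰)' > 0, and (c⁰)'' (s) ≤ C (c⁰(s))^{-3/2} ((c⁰)'(s))² for all s ∈ [s1, s_max), where C > 0 and c⁰(s1) ≥ 1. Then (c⁰)' is bounded on [s1, s_max) and c⁰(s) - c⁰(s1) ≤ C' |s - s1| for a constant C' depending only on C, c⁰(s1), (c⁰)'(s1). -/

import Mathlib

theorem stmt13 (c : ℝ → ℝ) (s1 smax C : ℝ) (hs : s1 < smax) (hC : 0 < C)
    (hinit : 1 ≤ c s1)
    (hpos : ∀ s ∈ Set.Ico s1 smax, 0 < c s)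
    (hdiff : ∀ s ∈ Set.Ico s1 smax, DifferentiableAt ℝ c s)
    (hd1 : ∀ s ∈ Set.Ico s1 smax, 0 < deriv c s)
    (hdiff2 : ∀ s ∈ Set.Ico s1 smax, DifferentiableAt ℝ (deriv c) s)
    (hineq : ∀ s ∈ Set.Ico s1 smax,
      deriv (deriv c) s ≤ C * (c s) ^ ((-3:ℝ)/2) * (deriv c s) ^ 2) :
    ∃ M C' : ℝ, 0 < C' ∧ (∀ s ∈ Set.Ico s1 smax, deriv c s ≤ M) ∧
      ∀ s ∈ Set.Ico s1 smax, c s - c s1 ≤ C' * |s - s1| := by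
  have hs1 : s1 ∈ Set.Ico s1 smax := ⟨le_refl _, hs⟩
  set g : ℝ → ℝ := fun s => Real.log (deriv c s) + 2 * C * (c s) ^ ((-1:ℝ)/2) with hg
  -- derivative of g at points of Ico
  have hgderiv : ∀ s ∈ Set.Ico s1 smax, HasDerivAt g
      (deriv (deriv c) s / deriv c s +
        2 * C * ((-1:ℝ)/2 * (c s) ^ ((-1:ℝ)/2 - 1) * deriv c s)) s := by
    intro s hsmem
    have h1 : HasDerivAt (fun t => Real.log (deriv c t)) (deriv (deriv c) s / deriv c s) s := by
      have := ((hdiff2 s hsmem).hasDerivAt).log (ne_of_gt (hd1 s hsmem))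
      simpa [div_eq_mul_inv] using this
    have h2 : HasDerivAt (fun t => (c t) ^ ((-1:ℝ)/2))
        ((-1:ℝ)/2 * (c s) ^ ((-1:ℝ)/2 - 1) * deriv c s) s := by
      have := ((hdiff s hsmem).hasDerivAt).rpow_const (p := (-1:ℝ)/2) (Or.inl (ne_of_gt (hpos s hsmem)))
      simpa [mul_comm, mul_assoc, mul_left_comm] using this
    exact h1.add ((h2.const_mul (2 * C)))
  have hgnonpos : ∀ s ∈ Set.Ico s1 smax,
      deriv (deriv c) s / deriv c s +
        2 * C * ((-1:ℝ)/2 * (c s) ^ ((-1:ℝ)/2 - 1) * deriv c s) ≤ 0 := by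
    intro s hsmem
    have hcpos := hpos s hsmem
    have hdpos := hd1 s hsmem
    have hexp : ((-1:ℝ)/2 - 1) = (-3:ℝ)/2 := by norm_num
    have h1 : deriv (deriv c) s / deriv c s ≤ C * (c s) ^ ((-3:ℝ)/2) * deriv c s := by
      rw [div_le_iff₀ hdpos]
      calc deriv (deriv c) s ≤ C * (c s) ^ ((-3:ℝ)/2) * (deriv c s) ^ 2 := hineq s hsmem
        _ = C * (c s) ^ ((-3:ℝ)/2) * deriv c s * deriv c s := by ring
    rw [hexp]
    nlinarith [h1]
  -- g is antitone on Ico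
  have hconv : Convex ℝ (Set.Ico s1 smax) := convex_Ico _ _
  have hgcont : ContinuousOn g (Set.Ico s1 smax) := fun s hsmem =>
    ((hgderiv s hsmem).continuousAt).continuousWithinAt
  have hgdiff : DifferentiableOn ℝ g (interior (Set.Ico s1 smax)) := by
    intro s hsmem
    rw [interior_Ico] at hsmem
    exact ((hgderiv s ⟨le_of_lt hsmem.1, hsmem.2⟩).differentiableAt).differentiableWithinAt
  have hganti : AntitoneOn g (Set.Ico s1 smax) := by
    apply antitoneOn_of_deriv_nonpos hconv hgcont hgdiff
    intro s hsmem
    rw [interior_Ico] at hsmem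
    have hsmem' : s ∈ Set.Ico s1 smax := ⟨le_of_lt hsmem.1, hsmem.2⟩
    rw [(hgderiv s hsmem').deriv]
    exact hgnonpos s hsmem'
  set M : ℝ := deriv c s1 * Real.exp (2 * C) with hM
  have hMpos : 0 < M := mul_pos (hd1 s1 hs1) (Real.exp_pos _)
  have hbound : ∀ s ∈ Set.Ico s1 smax, deriv c s ≤ M := by
    intro s hsmem
    have hgle : g s ≤ g s1 := hganti hs1 hsmem hsmem.1
    have hcs1 : (0:ℝ) ≤ (c s) ^ ((-1:ℝ)/2) :=
      Real.rpow_nonneg (le_of_lt (hpos s hsmem)) _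
    have hcs1' : (c s1) ^ ((-1:ℝ)/2) ≤ 1 := by
      have := Real.rpow_le_one_of_one_le_of_nonpos hinit (by norm_num : ((-1:ℝ)/2) ≤ 0)
      exact this
    have hlog : Real.log (deriv c s) ≤ Real.log (deriv c s1) + 2 * C := by
      have h2C : 2 * C * (c s1) ^ ((-1:ℝ)/2) ≤ 2 * C := by
        nlinarith
      have h0 : 0 ≤ 2 * C * (c s) ^ ((-1:ℝ)/2) := by positivity
      simp only [hg] at hgle
      linarith
    calc deriv c s = Real.exp (Real.log (deriv c s)) :=
          (Real.exp_log (hd1 s hsmem)).symm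
      _ ≤ Real.exp (Real.log (deriv c s1) + 2 * C) := Real.exp_le_exp.mpr hlog
      _ = deriv c s1 * Real.exp (2 * C) := by
          rw [Real.exp_add, Real.exp_log (hd1 s1 hs1)]
  refine ⟨M, M, hMpos, hbound, ?_⟩
  -- linear growth: h s = M * s - c s is monotone
  have hhderiv : ∀ s ∈ Set.Ico s1 smax,
      HasDerivAt (fun t => M * t - c t) (M - deriv c s) s := by
    intro s hsmem
    exact (((hasDerivAt_id s).const_mul M).sub (hdiff s hsmem).hasDerivAt).congr_deriv (by simp)
  have hhmono : MonotoneOn (fun t => M * t - c t) (Set.Ico s1 smax) := by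
    apply monotoneOn_of_deriv_nonneg hconv
    · exact fun s hsmem => ((hhderiv s hsmem).continuousAt).continuousWithinAt
    · intro s hsmem
      rw [interior_Ico] at hsmem
      exact ((hhderiv s ⟨le_of_lt hsmem.1, hsmem.2⟩).differentiableAt).differentiableWithinAt
    · intro s hsmem
      rw [interior_Ico] at hsmem
      have hsmem' : s ∈ Set.Ico s1 smax := ⟨le_of_lt hsmem.1, hsmem.2⟩
      rw [(hhderiv s hsmem').deriv]
      linarith [hbound s hsmem']
  intro s hsmem
  have := hhmono hs1 hsmem hsmem.1
  simp only at this
  have habs : |s - s1| = s - s1 := abs_of_nonneg (by linarith [hsmem.1])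
  rw [habs]
  nlinarith
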